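/- Let θ ∈ (0, π), let 0 ≤ σ ≤ 1, let c₀ ≥ 1, and let ω₁, ω₂, … be real numbers with |ω_i| ≤ c₀ for all i. Then for every k ≥ 0, |X_{k+1} − X_k| / Y_k ≤ (√5 / 2) · σ c₀² / sin² θ. -/

import Mathlib

open Matrix

/-- The Möbius action of a real 2×2 matrix `M = [[a,b],[c,d]]` (with positive determinant)
on the upper half plane: `M ∘ w = (a w + b)/(c w + d)`. -/
noncomputable def mobiusAct (M : Matrix (Fin 2) (Fin 2) ℝ) (w : ℂ) : ℂ :=
  ((M 0 0 : ℂ) * w + (M 0 1 : ℂ)) / ((M 1 0 : ℂ) * w + (M 1 1 : ℂ))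

/-- The transfer matrix `T_i = [[λ₀ − σ ω_i, −1],[1, 0]]` at energy `λ₀`. -/
def transferMat (lam₀ σ : ℝ) (ω : ℕ → ℝ) (i : ℕ) : Matrix (Fin 2) (Fin 2) ℝ :=
  !![lam₀ - σ * ω i, -1; 1, 0]

/-- `W_k = T_k T_{k−1} ⋯ T_1`, with `W_0 = I`. -/
def transferProd (lam₀ σ : ℝ) (ω : ℕ → ℝ) : ℕ → Matrix (Fin 2) (Fin 2) ℝ
  | 0 => 1
  | k + 1 => transferMat lam₀ σ ω (k + 1) * transferProd lam₀ σ ω k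

/-- `X_k = Re (W_k⁻¹ ∘ z)` where `z = e^{iθ}` and `λ₀ = 2 cos θ`. -/
noncomputable def Xseq (θ σ : ℝ) (ω : ℕ → ℝ) (k : ℕ) : ℝ :=
  (mobiusAct (transferProd (2 * Real.cos θ) σ ω k)⁻¹ (Complex.exp (θ * Complex.I))).re

/-- `Y_k = Im (W_k⁻¹ ∘ z)` where `z = e^{iθ}` and `λ₀ = 2 cos θ`. -/
noncomputable def Yseq (θ σ : ℝ) (ω : ℕ → ℝ) (k : ℕ) : ℝ :=
  (mobiusAct (transferProd (2 * Real.cos θ) σ ω k)⁻¹ (Complex.exp (θ * Complex.I))).im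

/- ### Auxiliary lemmas -/

lemma denom_ne (a b c d : ℝ) (h : a * d - b * c = 1) (z : ℂ) (hz : 0 < z.im) :
    (c : ℂ) * z + d ≠ 0 := by
  intro h0
  have him : ((c : ℂ) * z + d).im = 0 := by rw [h0]; simp
  simp [Complex.add_im, Complex.mul_im] at him
  rcases him with hc | hz0
  · have hd : ((d : ℂ)) = 0 := by simpa [hc] using h0
    have : d = 0 := by exact_mod_cast hd
    rw [hc, this] at h; simp at h
  · linarith

lemma im_mobius (a b c d : ℝ) (h : a * d - b * c = 1) (z : ℂ) (hz : 0 < z.im) :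
    (((a : ℂ) * z + b) / ((c : ℂ) * z + d)).im
      = z.im / Complex.normSq ((c : ℂ) * z + d) := by
  rw [Complex.div_im]
  rw [div_sub_div_same]
  congr 1
  simp [Complex.add_im, Complex.add_re, Complex.mul_im, Complex.mul_re]
  nlinarith [h]

lemma mobius_sub (a b c d : ℝ) (h : a * d - b * c = 1) (z z' : ℂ)
    (hz : 0 < z.im) (hz' : 0 < z'.im) :
    ((a : ℂ) * z' + b) / ((c : ℂ) * z' + d) - ((a : ℂ) * z + b) / ((c : ℂ) * z + d)
      = (z' - z) / (((c : ℂ) * z + d) * ((c : ℂ) * z' + d)) := by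
  have hD := denom_ne a b c d h z hz
  have hD' := denom_ne a b c d h z' hz'
  have hC : (a : ℂ) * d - b * c = 1 := by exact_mod_cast h
  rw [div_sub_div _ _ hD' hD, div_eq_div_iff (mul_ne_zero hD' hD) (mul_ne_zero hD hD')]
  linear_combination (z' - z) * ((c:ℂ) * z + d) * ((c:ℂ) * z' + d) * hC

lemma im_mobius_pos (M : Matrix (Fin 2) (Fin 2) ℝ) (hM : M.det = 1) (z : ℂ)
    (hz : 0 < z.im) : 0 < (mobiusAct M z).im := by
  rw [Matrix.det_fin_two] at hM
  rw [mobiusAct, im_mobius _ _ _ _ hM z hz]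
  have : 0 < Complex.normSq ((M 1 0 : ℂ) * z + (M 1 1 : ℂ)) :=
    Complex.normSq_pos.mpr (denom_ne _ _ _ _ hM z hz)
  positivity

lemma mobius_comp (A B : Matrix (Fin 2) (Fin 2) ℝ) (hA : A.det = 1) (hB : B.det = 1)
    (z : ℂ) (hz : 0 < z.im) :
    mobiusAct (A * B) z = mobiusAct A (mobiusAct B z) := by
  have himw : 0 < (mobiusAct B z).im := im_mobius_pos B hB z hz
  rw [Matrix.det_fin_two] at hA hB
  have hDB : ((B 1 0 : ℂ)) * z + (B 1 1 : ℂ) ≠ 0 := denom_ne _ _ _ _ hB z hz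
  have hDA : ((A 1 0 : ℂ)) * (mobiusAct B z) + (A 1 1 : ℂ) ≠ 0 :=
    denom_ne _ _ _ _ hA _ himw
  rw [mobiusAct, mobiusAct, mobiusAct]
  rw [mobiusAct] at hDA
  simp only [Matrix.mul_apply, Fin.sum_univ_two]
  push_cast
  have hd1 : ((A 1 0 : ℂ) * (B 0 0 : ℂ) + (A 1 1 : ℂ) * (B 1 0 : ℂ)) * z
      + ((A 1 0 : ℂ) * (B 0 1 : ℂ) + (A 1 1 : ℂ) * (B 1 1 : ℂ)) ≠ 0 := by
    have heq : ((A 1 0 : ℂ) * (B 0 0 : ℂ) + (A 1 1 : ℂ) * (B 1 0 : ℂ)) * z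
        + ((A 1 0 : ℂ) * (B 0 1 : ℂ) + (A 1 1 : ℂ) * (B 1 1 : ℂ))
        = ((A 1 0 : ℂ) * (((B 0 0 : ℂ) * z + (B 0 1 : ℂ)) / ((B 1 0 : ℂ) * z + (B 1 1 : ℂ)))
            + (A 1 1 : ℂ)) * ((B 1 0 : ℂ) * z + (B 1 1 : ℂ)) := by
      field_simp; ring
    rw [heq]
    exact mul_ne_zero hDA hDB
  rw [div_eq_div_iff hd1 hDA]
  field_simp
  ring

lemma mobius_jump (M : Matrix (Fin 2) (Fin 2) ℝ) (hM : M.det = 1) (z z' : ℂ)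
    (hz : 0 < z.im) (hz' : 0 < z'.im) :
    ((mobiusAct M z').re - (mobiusAct M z).re) ^ 2
      ≤ (mobiusAct M z).im ^ 2 *
        (Complex.normSq (z' - z) / (z.im * z'.im)
          + (Complex.normSq (z' - z) / (z.im * z'.im)) ^ 2 / 4) := by
  have hdet := hM
  rw [Matrix.det_fin_two] at hdet
  set a := M 0 0; set b := M 0 1; set c := M 1 0; set d := M 1 1
  have hD := denom_ne a b c d hdet z hz
  have hD' := denom_ne a b c d hdet z' hz'
  set q : ℝ := Complex.normSq (z' - z) / (z.im * z'.im) with hqdef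
  set w := mobiusAct M z with hw
  set w' := mobiusAct M z' with hw'
  have hY : w.im = z.im / Complex.normSq ((c : ℂ) * z + d) := by
    rw [hw, mobiusAct]; exact im_mobius a b c d hdet z hz
  have hY' : w'.im = z'.im / Complex.normSq ((c : ℂ) * z' + d) := by
    rw [hw', mobiusAct]; exact im_mobius a b c d hdet z' hz'
  have hYpos : 0 < w.im := im_mobius_pos M hM z hz
  have hY'pos : 0 < w'.im := im_mobius_pos M hM z' hz'
  have hsub : w' - w = (z' - z) / (((c : ℂ) * z + d) * ((c : ℂ) * z' + d)) := by
    rw [hw, hw', mobiusAct, mobiusAct]; exact mobius_sub a b c d hdet z z' hz hz'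
  have hS : Complex.normSq (w' - w)
      = Complex.normSq (z' - z) /
        (Complex.normSq ((c : ℂ) * z + d) * Complex.normSq ((c : ℂ) * z' + d)) := by
    rw [hsub, Complex.normSq_div, Complex.normSq_mul]
  have hnD : 0 < Complex.normSq ((c : ℂ) * z + d) := Complex.normSq_pos.mpr hD
  have hnD' : 0 < Complex.normSq ((c : ℂ) * z' + d) := Complex.normSq_pos.mpr hD'
  have hq : Complex.normSq (w' - w) = q * (w.im * w'.im) := by
    rw [hS, hqdef, hY, hY']
    field_simp
  have hre : (w' - w).re = w'.re - w.re := Complex.sub_re w' w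
  have him : (w' - w).im = w'.im - w.im := Complex.sub_im w' w
  have hns : Complex.normSq (w' - w) = (w' - w).re ^ 2 + (w' - w).im ^ 2 := by
    rw [Complex.normSq_apply]; ring
  set Y := w.im; set Y' := w'.im
  set dx := (w' - w).re
  have hSval : dx ^ 2 + (Y' - Y) ^ 2 = q * (Y * Y') := by
    rw [← him]; rw [← hns]; exact hq
  have key : 4 * Y' ^ 2 * dx ^ 2
      ≤ 4 * Y * Y' * (dx ^ 2 + (Y' - Y) ^ 2) + (dx ^ 2 + (Y' - Y) ^ 2) ^ 2 := by
    nlinarith [sq_nonneg (dx ^ 2 - (Y' - Y) ^ 2 - 2 * Y * (Y' - Y))]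
  have key2 : 4 * Y' ^ 2 * dx ^ 2 ≤ 4 * Y' ^ 2 * (Y ^ 2 * (q + q ^ 2 / 4)) := by
    calc 4 * Y' ^ 2 * dx ^ 2
        ≤ 4 * Y * Y' * (dx ^ 2 + (Y' - Y) ^ 2) + (dx ^ 2 + (Y' - Y) ^ 2) ^ 2 := key
      _ = 4 * Y' ^ 2 * (Y ^ 2 * (q + q ^ 2 / 4)) := by rw [hSval]; ring
  have h4 : (0:ℝ) < 4 * Y' ^ 2 := by positivity
  have hfin := le_of_mul_le_mul_left key2 h4
  calc (w'.re - w.re) ^ 2 = dx ^ 2 := by rw [hre]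
    _ ≤ Y ^ 2 * (q + q ^ 2 / 4) := hfin

lemma det_transferMat (lam₀ σ : ℝ) (ω : ℕ → ℝ) (i : ℕ) :
    (transferMat lam₀ σ ω i).det = 1 := by
  simp [transferMat, Matrix.det_fin_two_of]

lemma det_transferProd (lam₀ σ : ℝ) (ω : ℕ → ℝ) (k : ℕ) :
    (transferProd lam₀ σ ω k).det = 1 := by
  induction k with
  | zero => simp [transferProd]
  | succ n ih => rw [transferProd, Matrix.det_mul, ih, det_transferMat]; ring

lemma transferMat_inv (lam₀ σ : ℝ) (ω : ℕ → ℝ) (i : ℕ) :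
    (transferMat lam₀ σ ω i)⁻¹ = !![0, 1; -1, lam₀ - σ * ω i] := by
  apply Matrix.inv_eq_right_inv
  rw [transferMat, Matrix.mul_fin_two, Matrix.one_fin_two]
  norm_num

lemma det_inv_transferProd (lam₀ σ : ℝ) (ω : ℕ → ℝ) (k : ℕ) :
    ((transferProd lam₀ σ ω k)⁻¹).det = 1 := by
  rw [Matrix.det_nonsing_inv, det_transferProd]
  simp

/-- Bound on the jumps of the real part: for `θ ∈ (0,π)`, `0 ≤ σ ≤ 1`, `c₀ ≥ 1` and
`|ω_i| ≤ c₀` for all `i ≥ 1`, one has `|X_{k+1} − X_k| / Y_k ≤ (√5/2) σ c₀² / sin² θ`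
for all `k ≥ 0`. -/
theorem real_part_jump_bound
    (θ σ c₀ : ℝ) (ω : ℕ → ℝ)
    (hθ : θ ∈ Set.Ioo 0 Real.pi)
    (hσ0 : 0 ≤ σ) (hσ1 : σ ≤ 1) (hc₀ : 1 ≤ c₀)
    (hω : ∀ i, 1 ≤ i → |ω i| ≤ c₀) :
    ∀ k : ℕ, |Xseq θ σ ω (k + 1) - Xseq θ σ ω k| / Yseq θ σ ω k
      ≤ Real.sqrt 5 / 2 * (σ * c₀ ^ 2) / Real.sin θ ^ 2 := by
  intro k
  obtain ⟨hθ0, hθπ⟩ := hθ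
  have hsin : 0 < Real.sin θ := Real.sin_pos_of_pos_of_lt_pi hθ0 hθπ
  set z : ℂ := Complex.exp (θ * Complex.I) with hzdef
  have hzre : z.re = Real.cos θ := Complex.exp_ofReal_mul_I_re θ
  have hzim : z.im = Real.sin θ := Complex.exp_ofReal_mul_I_im θ
  have hzim0 : 0 < z.im := by rw [hzim]; exact hsin
  set s : ℝ := σ * ω (k + 1) with hsdef
  set W : Matrix (Fin 2) (Fin 2) ℝ := transferProd (2 * Real.cos θ) σ ω k with hWdef
  have hdetWinv : (W⁻¹).det = 1 := det_inv_transferProd _ _ _ _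
  set Tinv : Matrix (Fin 2) (Fin 2) ℝ := !![0, 1; -1, 2 * Real.cos θ - s] with hTdef
  have hdetTinv : Tinv.det = 1 := by
    rw [hTdef]; simp [Matrix.det_fin_two_of]
  set z' : ℂ := mobiusAct Tinv z with hz'def
  have hz'im : 0 < z'.im := im_mobius_pos Tinv hdetTinv z hzim0
  -- identify X_{k+1}, X_k, Y_k
  have hTinv : (transferMat (2 * Real.cos θ) σ ω (k + 1))⁻¹ = Tinv := by
    rw [transferMat_inv, hTdef, hsdef]
  have hcomp : mobiusAct (transferProd (2 * Real.cos θ) σ ω (k + 1))⁻¹ z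
      = mobiusAct W⁻¹ z' := by
    have h1 : transferProd (2 * Real.cos θ) σ ω (k + 1)
        = transferMat (2 * Real.cos θ) σ ω (k + 1) * W := rfl
    rw [h1, Matrix.mul_inv_rev, hTinv,
      mobius_comp W⁻¹ Tinv hdetWinv hdetTinv z hzim0, hz'def]
  have hX1 : Xseq θ σ ω (k + 1) = (mobiusAct W⁻¹ z').re := by
    rw [Xseq, ← hzdef, hcomp]
  have hX0 : Xseq θ σ ω k = (mobiusAct W⁻¹ z).re := rfl
  have hY0 : Yseq θ σ ω k = (mobiusAct W⁻¹ z).im := rfl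
  have hYpos : 0 < Yseq θ σ ω k := by rw [hY0]; exact im_mobius_pos _ hdetWinv z hzim0
  -- compute z' and q
  have hz'eq : z' = 1 / (((2 * Real.cos θ - s : ℝ) : ℂ) - z) := by
    rw [hz'def, hTdef, mobiusAct]
    norm_num
    ring_nf
  have hE : ((2 * Real.cos θ - s : ℝ) : ℂ) - z ≠ 0 := by
    have h := denom_ne 0 1 (-1) (2 * Real.cos θ - s) (by ring) z hzim0
    have heq : ((-1 : ℝ) : ℂ) * z + ((2 * Real.cos θ - s : ℝ) : ℂ)
        = ((2 * Real.cos θ - s : ℝ) : ℂ) - z := by push_cast; ring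
    rwa [heq] at h
  have hz2 : z ^ 2 + 1 = 2 * Complex.cos (θ : ℂ) * z := by
    rw [hzdef, Complex.exp_mul_I]
    linear_combination (Complex.sin (θ:ℂ)) ^ 2 * Complex.I_sq
      - Complex.sin_sq_add_cos_sq (θ:ℂ)
  have hnum : z' - z = (s : ℂ) * z / (((2 * Real.cos θ - s : ℝ) : ℂ) - z) := by
    rw [hz'eq, sub_eq_iff_eq_add, div_add' _ _ _ hE, div_eq_div_iff hE hE]
    push_cast
    linear_combination ((2 * Complex.cos (θ:ℂ) - s) - z) * hz2
  have hz'imval : z'.im = z.im / Complex.normSq (((2 * Real.cos θ - s : ℝ) : ℂ) - z) := by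
    have h := im_mobius 0 1 (-1) (2 * Real.cos θ - s) (by ring) z hzim0
    have heq : ((-1 : ℝ) : ℂ) * z + ((2 * Real.cos θ - s : ℝ) : ℂ)
        = ((2 * Real.cos θ - s : ℝ) : ℂ) - z := by push_cast; ring
    rw [heq] at h
    rw [hz'eq]
    rw [show (1 : ℂ) / (((2 * Real.cos θ - s : ℝ) : ℂ) - z)
        = (((0:ℝ):ℂ) * z + ((1:ℝ):ℂ)) / (((2 * Real.cos θ - s : ℝ) : ℂ) - z) by push_cast; ring]
    rw [← heq] at h ⊢
    exact h
  have hnormSqz : Complex.normSq z = 1 := by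
    rw [Complex.normSq_apply, hzre, hzim]
    nlinarith [Real.sin_sq_add_cos_sq θ]
  have hnE : 0 < Complex.normSq (((2 * Real.cos θ - s : ℝ) : ℂ) - z) :=
    Complex.normSq_pos.mpr hE
  have hqval : Complex.normSq (z' - z) / (z.im * z'.im) = s ^ 2 / Real.sin θ ^ 2 := by
    rw [hnum, Complex.normSq_div, Complex.normSq_mul, hnormSqz, hz'imval, hzim,
      Complex.normSq_ofReal]
    set n : ℝ := Complex.normSq (((2 * Real.cos θ - s : ℝ) : ℂ) - z) with hndef
    have hn0 : n ≠ 0 := ne_of_gt hnE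
    have hsin0 : Real.sin θ ≠ 0 := ne_of_gt hsin
    field_simp
  -- the main estimate
  have hjump := mobius_jump W⁻¹ hdetWinv z z' hzim0 hz'im
  rw [hqval] at hjump
  set Q : ℝ := s ^ 2 / Real.sin θ ^ 2 with hQdef
  set P : ℝ := Real.sin θ with hPdef
  have hP1 : P ≤ 1 := Real.sin_le_one θ
  have hQ0 : 0 ≤ Q := by positivity
  set B : ℝ := Real.sqrt 5 / 2 * (σ * c₀ ^ 2) / P ^ 2 with hBdef
  have hB0 : 0 ≤ B := by positivity
  have hs2 : s ^ 2 ≤ σ ^ 2 * c₀ ^ 2 := by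
    have h1 : |ω (k + 1)| ≤ c₀ := hω (k + 1) (by omega)
    have h2 : |s| ≤ σ * c₀ := by
      rw [hsdef, abs_mul, abs_of_nonneg hσ0]
      exact mul_le_mul_of_nonneg_left h1 hσ0
    calc s ^ 2 = |s| ^ 2 := (sq_abs s).symm
      _ ≤ (σ * c₀) ^ 2 := pow_le_pow_left₀ (abs_nonneg s) h2 2
      _ = σ ^ 2 * c₀ ^ 2 := by ring
  have hQB : Q + Q ^ 2 / 4 ≤ B ^ 2 := by
    have h5 : Real.sqrt 5 ^ 2 = 5 := Real.sq_sqrt (by norm_num)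
    have hB2 : B ^ 2 = 5 * σ ^ 2 * c₀ ^ 4 / (4 * P ^ 4) := by
      rw [hBdef]
      rw [div_pow, mul_pow, div_pow, h5]
      ring
    have hQform : Q + Q ^ 2 / 4 = (4 * s ^ 2 * P ^ 2 + s ^ 4) / (4 * P ^ 4) := by
      rw [hQdef]
      field_simp
    rw [hB2, hQform]
    have hP2 : P ^ 2 ≤ 1 := pow_le_one₀ hsin.le hP1
    have hc₀0 : (0:ℝ) ≤ c₀ := le_trans zero_le_one hc₀
    have hc2 : c₀ ^ 2 ≤ c₀ ^ 4 := pow_le_pow_right₀ hc₀ (by norm_num)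
    have hsig : σ ^ 2 ≤ 1 := pow_le_one₀ hσ0 hσ1
    have a1 : s ^ 2 * P ^ 2 ≤ s ^ 2 := mul_le_of_le_one_right (sq_nonneg s) hP2
    have a3 : σ ^ 2 * c₀ ^ 2 ≤ σ ^ 2 * c₀ ^ 4 :=
      mul_le_mul_of_nonneg_left hc2 (sq_nonneg σ)
    have a4 : s ^ 4 ≤ σ ^ 2 * c₀ ^ 4 := by
      have b1 : (s ^ 2) ^ 2 ≤ (σ ^ 2 * c₀ ^ 2) ^ 2 :=
        pow_le_pow_left₀ (sq_nonneg s) hs2 2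
      have hσ4 : σ ^ 2 * σ ^ 2 ≤ σ ^ 2 := mul_le_of_le_one_right (sq_nonneg σ) hsig
      have b2 : (σ ^ 2 * c₀ ^ 2) ^ 2 ≤ σ ^ 2 * c₀ ^ 4 := by
        calc (σ ^ 2 * c₀ ^ 2) ^ 2 = σ ^ 2 * σ ^ 2 * c₀ ^ 4 := by ring
          _ ≤ σ ^ 2 * c₀ ^ 4 := by
              apply mul_le_mul_of_nonneg_right hσ4 (by positivity)
      calc s ^ 4 = (s ^ 2) ^ 2 := by ring
        _ ≤ (σ ^ 2 * c₀ ^ 2) ^ 2 := b1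
        _ ≤ σ ^ 2 * c₀ ^ 4 := b2
    apply div_le_div_of_nonneg_right ?_ (by positivity)
    · linarith only [a1, a3, a4, hs2]
  have hYB : |Xseq θ σ ω (k + 1) - Xseq θ σ ω k| ≤ Yseq θ σ ω k * B := by
    have hsq : (Xseq θ σ ω (k + 1) - Xseq θ σ ω k) ^ 2 ≤ (Yseq θ σ ω k * B) ^ 2 := by
      calc (Xseq θ σ ω (k + 1) - Xseq θ σ ω k) ^ 2
          = ((mobiusAct W⁻¹ z').re - (mobiusAct W⁻¹ z).re) ^ 2 := by rw [hX1, hX0]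
        _ ≤ (mobiusAct W⁻¹ z).im ^ 2 * (Q + Q ^ 2 / 4) := hjump
        _ ≤ (mobiusAct W⁻¹ z).im ^ 2 * B ^ 2 := by
            apply mul_le_mul_of_nonneg_left hQB (sq_nonneg _)
        _ = (Yseq θ σ ω k * B) ^ 2 := by rw [hY0]; ring
    have h1 := Real.sqrt_le_sqrt hsq
    rwa [Real.sqrt_sq_eq_abs, Real.sqrt_sq (by positivity)] at h1
  rw [div_le_iff₀ hYpos]
  calc |Xseq θ σ ω (k + 1) - Xseq θ σ ω k| ≤ Yseq θ σ ω k * B := hYB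
    _ = B * Yseq θ σ ω k := by ring
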